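/- For every platform j and every real μ with 0 < μ ≤ n, the cost-per-value ratio of the continuous (linearly interpolated) extension is bounded by the marginal cost of the current level: c_j(μ)/v_j(μ) ≤ MC_j(⌈μ⌉). -/
import Mathlib


/-- The marginal cost of bid level `μ ≥ 1`:
`MC(μ) = (c(μ) − c(μ−1)) / (v(μ) − v(μ−1))`. -/
noncomputable def MC (c v : ℕ → ℝ) (μ : ℕ) : ℝ :=
  (c μ - c (μ - 1)) / (v μ - v (μ - 1))

/-- Linear interpolation of `f : ℕ → ℝ` to nonnegative reals:
for `⌊x⌋ ≤ x ≤ ⌊x⌋ + 1`,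
`interp f x = (⌈x⌉ − x)·f(⌊x⌋) + (x − ⌊x⌋)·f(⌈x⌉)`. -/
noncomputable def interp (f : ℕ → ℝ) (x : ℝ) : ℝ :=
  f ⌊x⌋₊ + (x - ⌊x⌋₊) * (f (⌊x⌋₊ + 1) - f ⌊x⌋₊)

private lemma v_pos_aux (n : ℕ) (v : ℕ → ℝ) (hv0 : v 0 = 0)
    (hv : ∀ μ < n, v μ < v (μ + 1)) :
    ∀ m, 1 ≤ m → m ≤ n → 0 < v m := by
  intro m hm1 hmn
  induction m with
  | zero => omega
  | succ k ih =>
    rcases Nat.eq_zero_or_pos k with hk | hk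
    · subst hk
      have := hv 0 (by omega)
      linarith
    · have h1 := hv k (by omega)
      have h2 := ih (by omega) (by omega)
      linarith

private lemma key_aux (n : ℕ) (c v : ℕ → ℝ) (hc0 : c 0 = 0) (hv0 : v 0 = 0)
    (hv : ∀ μ < n, v μ < v (μ + 1))
    (hmono : ∀ μ, 1 ≤ μ → μ < n → MC c v μ ≤ MC c v (μ + 1)) :
    ∀ m, 1 ≤ m → m ≤ n → c m ≤ MC c v m * v m := by
  intro m hm1
  induction m, hm1 using Nat.le_induction with
  | base =>
    intro h1n
    have hv1 : 0 < v 1 := by have := hv 0 (by omega); linarith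
    simp only [MC, hc0, hv0, sub_zero, Nat.sub_self]
    rw [div_mul_cancel₀ _ hv1.ne']
  | succ m hm ih =>
    intro hmn
    have hΔ : 0 < v (m + 1) - v m := by have := hv m (by omega); linarith
    have hMC : MC c v (m + 1) * (v (m + 1) - v m) = c (m + 1) - c m := by
      simp only [MC, Nat.add_sub_cancel]
      rw [div_mul_cancel₀ _ hΔ.ne']
    have hvm : 0 < v m := v_pos_aux n v hv0 hv m hm (by omega)
    have h1 := ih (by omega)
    have h2 := hmono m hm (by omega)
    have h3 : MC c v m * v m ≤ MC c v (m + 1) * v m :=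
      mul_le_mul_of_nonneg_right h2 hvm.le
    nlinarith

theorem interp_cost_per_value_le_marginal_cost
    (n : ℕ) (c v : ℕ → ℝ)
    (hc0 : c 0 = 0) (hv0 : v 0 = 0)
    (hc : ∀ μ < n, c μ < c (μ + 1)) (hv : ∀ μ < n, v μ < v (μ + 1))
    (hmono : ∀ μ, 1 ≤ μ → μ < n → MC c v μ ≤ MC c v (μ + 1))
    (x : ℝ) (hx : 0 < x) (hxn : x ≤ n) :
    interp c x / interp v x ≤ MC c v ⌈x⌉₊ := by
  set k := ⌊x⌋₊ with hkdef
  have hkx : (k : ℝ) ≤ x := Nat.floor_le hx.le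
  have hxk1 : x < (k : ℝ) + 1 := Nat.lt_floor_add_one x
  have hceiln : ⌈x⌉₊ ≤ n := Nat.ceil_le.mpr (by exact_mod_cast hxn)
  by_cases hxeq : (k : ℝ) = x
  · -- x is a natural number k ≥ 1
    have hk1 : 1 ≤ k := by
      by_contra h
      push_neg at h
      interval_cases k
      simp only [Nat.cast_zero] at hxeq
      linarith
    have hceil : ⌈x⌉₊ = k := by rw [← hxeq, Nat.ceil_natCast]
    have hkn : k ≤ n := hceil ▸ hceiln
    have hvk : 0 < v k := v_pos_aux n v hv0 hv k hk1 hkn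
    have hkey := key_aux n c v hc0 hv0 hv hmono k hk1 hkn
    have hic : interp c x = c k := by simp [interp, ← hkdef, ← hxeq]
    have hiv : interp v x = v k := by simp [interp, ← hkdef, ← hxeq]
    rw [hic, hiv, hceil, div_le_iff₀ hvk]
    exact hkey
  · -- x is strictly between k and k+1
    have hlt : (k : ℝ) < x := lt_of_le_of_ne hkx hxeq
    have hceil : ⌈x⌉₊ = k + 1 := by
      rw [Nat.ceil_eq_iff (by omega)]
      constructor
      · simpa using hlt
      · push_cast; linarith
    have hkn : k + 1 ≤ n := hceil ▸ hceiln
    have hΔv : 0 < v (k + 1) - v k := by have := hv k (by omega); linarith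
    have hMCeq : MC c v (k + 1) = (c (k + 1) - c k) / (v (k + 1) - v k) := by
      simp [MC]
    have hvk0 : 0 ≤ v k := by
      rcases Nat.eq_zero_or_pos k with hk | hk
      · simp [hk, hv0]
      · exact (v_pos_aux n v hv0 hv k hk (by omega)).le
    have ht : 0 < x - (k : ℝ) := by linarith
    have hiv : 0 < interp v x := by
      simp only [interp, ← hkdef]
      nlinarith
    -- key cross-multiplied inequality: c k * Δv ≤ (c(k+1)-c k) * v k
    have hcross : c k * (v (k + 1) - v k) ≤ (c (k + 1) - c k) * v k := by
      rcases Nat.eq_zero_or_pos k with hk | hk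
      · simp [hk, hc0, hv0]
      · have hvk : 0 < v k := v_pos_aux n v hv0 hv k hk (by omega)
        have hkey := key_aux n c v hc0 hv0 hv hmono k hk (by omega)
        have hmc := hmono k hk (by omega)
        have h1 : c k ≤ MC c v (k + 1) * v k := by
          calc c k ≤ MC c v k * v k := hkey
            _ ≤ MC c v (k + 1) * v k := mul_le_mul_of_nonneg_right hmc hvk.le
        rw [hMCeq, div_mul_eq_mul_div, le_div_iff₀ hΔv] at h1
        linarith
    rw [hceil, hMCeq, div_le_div_iff₀ hiv hΔv]
    simp only [interp, ← hkdef]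
    nlinarith [mul_le_mul_of_nonneg_left hcross ht.le]
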